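/- With notation from the Wiener lemma setting: if ψ : E → ℂ satisfies ψ(ξ) ≠ 0 and agrees with φ̂ on I_ξ ∩ E for some φ ∈ L¹(ℝ) (ψ ∈ L_loc^{E,ξ}), then there exist an interval I'_ξ ∋ ξ and functions φ₀, φ₁ ∈ L¹(ℝ) such that ψ² + φ̂₁ψ + φ̂₀ = 0 on I'_ξ ∩ E; i.e., L_loc^{E,ξ} ⊆ P^{1,2}[L_loc^{E,ξ}]. Moreover for any integer p ≥ 3, P^{1,2}[L_loc^{E,ξ}] ⊆ P^{1,p}[L_loc^{E,ξ}], where membership in P^{1,p} means ψ^p + φ̂₂ψ² + φ̂₁ψ + φ̂₀ = 0 on I_ξ ∩ E for some φ₀, φ₁, φ₂ ∈ L¹(ℝ). -/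

import Mathlib

open MeasureTheory
open scoped Convolution

/-- Fourier transform with the paper's normalization `ĝ(x) = ∫ e^{-iπxt} g(t) dt`. -/
noncomputable def paperFT (g : ℝ → ℂ) (x : ℝ) : ℂ :=
  ∫ t : ℝ, Complex.exp (-(Complex.I * (Real.pi : ℂ) * (x : ℂ) * (t : ℂ))) * g t

/-- `ψ ∈ L_loc^{E,ξ}`: `ψ(ξ) ≠ 0` and `ψ` agrees with the Fourier transform of an
integrable function on `I ∩ E` for some open interval `I ∋ ξ`. -/
def MemLloc (E : Set ℝ) (ξ : ℝ) (ψ : ℝ → ℂ) : Prop :=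
  ψ ξ ≠ 0 ∧ ∃ a b : ℝ, a < ξ ∧ ξ < b ∧ ∃ φ : ℝ → ℂ, Integrable φ ∧
    ∀ x ∈ Set.Ioo a b ∩ E, ψ x = paperFT φ x

/-- `ψ ∈ P^{1,2}[L_loc^{E,ξ}]`: `ψ² + φ̂₁ψ + φ̂₀ = 0` on `I ∩ E` for some open interval
`I ∋ ξ` and `φ₀, φ₁ ∈ L¹(ℝ)`. -/
def MemP12 (E : Set ℝ) (ξ : ℝ) (ψ : ℝ → ℂ) : Prop :=
  ∃ a b : ℝ, a < ξ ∧ ξ < b ∧ ∃ φ₀ φ₁ : ℝ → ℂ, Integrable φ₀ ∧ Integrable φ₁ ∧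
    ∀ x ∈ Set.Ioo a b ∩ E, ψ x ^ 2 + paperFT φ₁ x * ψ x + paperFT φ₀ x = 0

/-- `ψ ∈ P^{1,p}[L_loc^{E,ξ}]`: `ψ^p + φ̂₂ψ² + φ̂₁ψ + φ̂₀ = 0` on `I ∩ E` for some open
interval `I ∋ ξ` and `φ₀, φ₁, φ₂ ∈ L¹(ℝ)`. -/
def MemP1p (p : ℕ) (E : Set ℝ) (ξ : ℝ) (ψ : ℝ → ℂ) : Prop :=
  ∃ a b : ℝ, a < ξ ∧ ξ < b ∧ ∃ φ₀ φ₁ φ₂ : ℝ → ℂ,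
    Integrable φ₀ ∧ Integrable φ₁ ∧ Integrable φ₂ ∧
    ∀ x ∈ Set.Ioo a b ∩ E,
      ψ x ^ p + paperFT φ₂ x * ψ x ^ 2 + paperFT φ₁ x * ψ x + paperFT φ₀ x = 0

/-! ### Auxiliary lemmas -/

/-- The exponential kernel of `paperFT`. -/
noncomputable def eker (x : ℝ) (t : ℝ) : ℂ :=
  Complex.exp (-(Complex.I * (Real.pi : ℂ) * (x : ℂ) * (t : ℂ)))

lemma paperFT_eq (g : ℝ → ℂ) (x : ℝ) : paperFT g x = ∫ t : ℝ, eker x t * g t := rfl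

lemma paperFT_zero (x : ℝ) : paperFT 0 x = 0 := by simp [paperFT]

lemma paperFT_neg (f : ℝ → ℂ) (x : ℝ) : paperFT (-f) x = -paperFT f x := by
  simp [paperFT, integral_neg]

lemma eker_norm (x t : ℝ) : ‖eker x t‖ = 1 := by
  simp [eker, Complex.norm_exp]

lemma integrable_eker_mul {f : ℝ → ℂ} (hf : Integrable f) (x : ℝ) :
    Integrable (fun t => eker x t * f t) := by
  have : Integrable (eker x * f) := hf.bdd_mul (c := 1)
    (Complex.continuous_exp.comp (by continuity)).aestronglyMeasurable
    (Filter.Eventually.of_forall fun t => le_of_eq (eker_norm x t))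
  exact this

lemma paperFT_sub {f g : ℝ → ℂ} (hf : Integrable f) (hg : Integrable g) (x : ℝ) :
    paperFT (f - g) x = paperFT f x - paperFT g x := by
  have h1 := integrable_eker_mul hf x
  have h2 := integrable_eker_mul hg x
  simp only [paperFT, Pi.sub_apply, mul_sub]
  exact integral_sub h1 h2

lemma eker_add (x s t : ℝ) : eker x (s + t) = eker x s * eker x t := by
  rw [eker, eker, eker, ← Complex.exp_add]
  congr 1
  push_cast
  ring

/-- The paper Fourier transform turns convolution into multiplication. -/
lemma paperFT_conv (f g : ℝ → ℂ) (hf : Integrable f) (hg : Integrable g) (x : ℝ) :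
    paperFT (f ⋆[ContinuousLinearMap.mul ℝ ℂ] g) x = paperFT f x * paperFT g x := by
  have hef : Integrable (fun t => eker x t * f t) := integrable_eker_mul hf x
  have heg : Integrable (fun t => eker x t * g t) := integrable_eker_mul hg x
  have hprod : Integrable (Function.uncurry fun s t =>
      (eker x t * f t) * (eker x (s - t) * g (s - t))) (volume.prod volume) := by
    have := hef.convolution_integrand (ContinuousLinearMap.mul ℝ ℂ) heg
    simpa [Function.uncurry_def] using this
  simp only [paperFT_eq]
  calc (∫ s : ℝ, eker x s * (f ⋆[ContinuousLinearMap.mul ℝ ℂ] g) s)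
      = ∫ s : ℝ, ∫ t : ℝ, (eker x t * f t) * (eker x (s - t) * g (s - t)) := by
        refine integral_congr_ae (Filter.Eventually.of_forall fun s => ?_)
        show eker x s * (f ⋆[ContinuousLinearMap.mul ℝ ℂ] g) s = _
        rw [convolution_def, ← integral_const_mul]
        refine integral_congr_ae (Filter.Eventually.of_forall fun t => ?_)
        have : eker x s = eker x t * eker x (s - t) := by
          rw [← eker_add]; congr 1; ring
        simp only [ContinuousLinearMap.mul_apply']
        rw [this]; ring
    _ = ∫ t : ℝ, ∫ s : ℝ, (eker x t * f t) * (eker x (s - t) * g (s - t)) :=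
        integral_integral_swap hprod
    _ = ∫ t : ℝ, (eker x t * f t) * ∫ s : ℝ, eker x (s - t) * g (s - t) :=
        integral_congr_ae (Filter.Eventually.of_forall fun t =>
          integral_const_mul _ _)
    _ = ∫ t : ℝ, (eker x t * f t) * ∫ s : ℝ, eker x s * g s := by
        refine integral_congr_ae (Filter.Eventually.of_forall fun t => ?_)
        show _ * (∫ s : ℝ, eker x (s - t) * g (s - t)) = _ * _
        rw [integral_sub_right_eq_self (fun s => eker x s * g s) t]
    _ = (∫ t : ℝ, eker x t * f t) * (∫ t : ℝ, eker x t * g t) := by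
        rw [integral_mul_const]

/-- Powers of `ψ` can be written as `α̂ψ + β̂` on `T`, given a quadratic relation on `T`. -/
lemma pow_linear_reduce {T : Set ℝ} {ψ φ₀ φ₁ : ℝ → ℂ}
    (h0 : Integrable φ₀) (h1 : Integrable φ₁)
    (hT : ∀ x ∈ T, ψ x ^ 2 + paperFT φ₁ x * ψ x + paperFT φ₀ x = 0) :
    ∀ n : ℕ, ∃ α β : ℝ → ℂ, Integrable α ∧ Integrable β ∧
      ∀ x ∈ T, ψ x ^ (n + 2) = paperFT α x * ψ x + paperFT β x := by
  intro n
  induction n with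
  | zero =>
    refine ⟨-φ₁, -φ₀, h1.neg, h0.neg, fun x hx => ?_⟩
    have := hT x hx
    rw [paperFT_neg, paperFT_neg]
    linear_combination this
  | succ n ih =>
    obtain ⟨α, β, hα, hβ, hrel⟩ := ih
    refine ⟨β - α ⋆[ContinuousLinearMap.mul ℝ ℂ] φ₁,
      -(α ⋆[ContinuousLinearMap.mul ℝ ℂ] φ₀),
      hβ.sub (hα.integrable_convolution _ h1),
      (hα.integrable_convolution (ContinuousLinearMap.mul ℝ ℂ) h0).neg,
      fun x hx => ?_⟩
    have hq := hT x hx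
    have hr := hrel x hx
    rw [paperFT_sub hβ (hα.integrable_convolution _ h1), paperFT_neg,
      paperFT_conv α φ₁ hα h1, paperFT_conv α φ₀ hα h0]
    have : ψ x ^ (n + 1 + 2) = ψ x ^ (n + 2) * ψ x := by ring
    rw [this, hr]
    linear_combination (paperFT α x) * hq

/-- The inclusions `L_loc^{E,ξ} ⊆ P^{1,2}[L_loc^{E,ξ}] ⊆ P^{1,p}[L_loc^{E,ξ}]` for `p ≥ 3`. -/
theorem Lloc_subset_P12_subset_P1p (E : Set ℝ) (ξ : ℝ) (hξ : ξ ∈ E) (ψ : ℝ → ℂ) :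
    (MemLloc E ξ ψ → MemP12 E ξ ψ)
    ∧ ∀ p : ℕ, 3 ≤ p → (MemP12 E ξ ψ → MemP1p p E ξ ψ) := by
  constructor
  · rintro ⟨-, a, b, ha, hb, φ, hφ, hagree⟩
    refine ⟨a, b, ha, hb, 0, -φ, (integrable_zero _ _ _), hφ.neg, fun x hx => ?_⟩
    rw [paperFT_neg, paperFT_zero, hagree x hx]
    ring
  · rintro p hp ⟨a, b, ha, hb, φ₀, φ₁, h0, h1, hrel⟩
    obtain ⟨α, β, hα, hβ, hpow⟩ := pow_linear_reduce h0 h1 hrel (p - 2)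
    have hp2 : p - 2 + 2 = p := by omega
    refine ⟨a, b, ha, hb, -β, -α, 0, hβ.neg, hα.neg, (integrable_zero _ _ _),
      fun x hx => ?_⟩
    have := hpow x hx
    rw [hp2] at this
    rw [paperFT_neg, paperFT_neg, paperFT_zero, this]
    ring
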